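/- Let H be a Hilbert space with norm from inner product L, P ⊂ H a closed convex cone, and |·|_p a norm satisfying |u|_p ≤ S^{−1/2}·L(u,u)^{1/2} for the optimal constant S > 0. Suppose also that for every u, min_{v∈P} |u − v|_p = |u⁻|_p where u⁻ is the negative part. Then for α = (1/2)·S^{p/(2(p−2))}, any u with dist_L(u, P) ≤ α and u⁻ ∈ N (i.e., L(u⁻,u⁻) = |u⁻|_p^p > 0) leads to a contradiction; i.e., the tubular neighborhood B_α(P) = {u : dist_L(u,P) ≤ α} is disjoint from the nodal Nehari set E = {u : u⁺, u⁻ ∈ N}. -/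

import Mathlib

/-- The tubular neighborhood `B_α(P)` of the nonnegative cone `P`, with
`α = (1/2)·S^{p/(2(p−2))}`, is disjoint from the nodal Nehari set
`E = {u : u⁺, u⁻ ∈ N}`. -/
theorem stmt5 {H : Type*} [NormedAddCommGroup H] [InnerProductSpace ℝ H] [CompleteSpace H]
    (P : Set H) (hPclosed : IsClosed P) (hPconvex : Convex ℝ P)
    (hPcone : ∀ a : ℝ, 0 ≤ a → ∀ v ∈ P, a • v ∈ P)
    (p S : ℝ) (hp : 2 < p) (hS : 0 < S)
    (Np : H → ℝ) (hNp0 : ∀ u, 0 ≤ Np u)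
    (hSob : ∀ u : H, Np u ≤ S ^ (-(1 : ℝ) / 2) * ‖u‖)
    (pos neg : H → H)
    (hmin : ∀ u : H, IsLeast {x : ℝ | ∃ v ∈ P, x = Np (u - v)} (Np (neg u)))
    (E : Set H)
    (hE : E = {u : H | (pos u ≠ 0 ∧ ‖pos u‖ ^ 2 = Np (pos u) ^ p) ∧
                (neg u ≠ 0 ∧ ‖neg u‖ ^ 2 = Np (neg u) ^ p)})
    (α : ℝ) (hα : α = (1 / 2) * S ^ (p / (2 * (p - 2)))) :
    {u : H | Metric.infDist u P ≤ α} ∩ E = ∅ := by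
  ext u
  simp only [Set.mem_inter_iff, Set.mem_setOf_eq, Set.mem_empty_iff_false, iff_false]
  rintro ⟨hdist, huE⟩
  rw [hE] at huE
  obtain ⟨-, hne, heq⟩ := huE
  set t := Np (neg u) with htdef
  have ht0 : 0 ≤ t := hNp0 _
  have hp2 : (0:ℝ) < p - 2 := by linarith
  have hpne : p ≠ 0 := by positivity
  have htpos : 0 < t := by
    rcases ht0.lt_or_eq with h | h
    · exact h
    · exfalso
      rw [← h, Real.zero_rpow hpne] at heq
      have : ‖neg u‖ = 0 := by nlinarith [norm_nonneg (neg u)]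
      exact hne (norm_eq_zero.mp this)
  set c := S ^ ((1:ℝ)/2) with hcdef
  have hc : 0 < c := Real.rpow_pos_of_pos hS _
  have hcc : c * S ^ (-(1:ℝ)/2) = 1 := by
    rw [hcdef, ← Real.rpow_add hS]
    norm_num
  -- lower bound on infDist
  obtain ⟨v0, hv0P, -⟩ := (hmin u).1
  have hlb : ∀ v ∈ P, c * t ≤ dist u v := by
    intro v hv
    have h1 : t ≤ Np (u - v) := (hmin u).2 ⟨v, hv, rfl⟩
    have h2 : Np (u - v) ≤ S ^ (-(1:ℝ)/2) * ‖u - v‖ := hSob _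
    have h3 : c * t ≤ c * (S ^ (-(1:ℝ)/2) * ‖u - v‖) := by
      exact mul_le_mul_of_nonneg_left (h1.trans h2) hc.le
    rw [← mul_assoc, hcc, one_mul] at h3
    rwa [dist_eq_norm]
  have hinf : c * t ≤ Metric.infDist u P := by
    by_contra h
    obtain ⟨v, hv, hdv⟩ := (Metric.infDist_lt_iff ⟨v0, hv0P⟩).mp (not_le.mp h)
    exact absurd hdv (not_lt.mpr (hlb v hv))
  have hct : c * t ≤ α := hinf.trans hdist
  -- Nehari lower bound on t
  have hsob : c * t ≤ ‖neg u‖ := by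
    have h3 := mul_le_mul_of_nonneg_left (hSob (neg u)) hc.le
    rwa [← mul_assoc, hcc, one_mul] at h3
  have hsq : S * (t * t) ≤ t ^ p := by
    have : (c * t) * (c * t) ≤ ‖neg u‖ * ‖neg u‖ :=
      mul_le_mul hsob hsob (by positivity) (norm_nonneg _)
    have hcc2 : c * c = S := by
      rw [hcdef, ← Real.rpow_add hS]; norm_num
    calc S * (t * t) = (c * t) * (c * t) := by rw [← hcc2]; ring
      _ ≤ ‖neg u‖ * ‖neg u‖ := this
      _ = t ^ p := by rw [← heq]; ring
  have htt : t * t = t ^ (2:ℝ) := by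
    rw [show (2:ℝ) = ((2:ℕ):ℝ) by norm_num, Real.rpow_natCast]; ring
  have htp : t ^ p = t ^ (p - 2) * (t * t) := by
    rw [htt, ← Real.rpow_add htpos]
    norm_num
  have hS_le : S ≤ t ^ (p - 2) := by
    rw [htp] at hsq
    exact le_of_mul_le_mul_right hsq (mul_pos htpos htpos)
  have ht_lb : S ^ ((1:ℝ)/(p-2)) ≤ t := by
    have := Real.rpow_le_rpow hS.le hS_le (by positivity : (0:ℝ) ≤ 1/(p-2))
    rwa [← Real.rpow_mul htpos.le, mul_one_div, div_self hp2.ne', Real.rpow_one] at this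
  -- combine
  have hX : S ^ ((1:ℝ)/2) * S ^ ((1:ℝ)/(p-2)) = S ^ (p / (2 * (p - 2))) := by
    rw [← Real.rpow_add hS]
    congr 1
    field_simp
    ring
  have hfinal : S ^ (p / (2 * (p - 2))) ≤ (1/2) * S ^ (p / (2 * (p - 2))) := by
    calc S ^ (p / (2 * (p - 2))) = c * S ^ ((1:ℝ)/(p-2)) := hX.symm
      _ ≤ c * t := mul_le_mul_of_nonneg_left ht_lb hc.le
      _ ≤ α := hct
      _ = (1/2) * S ^ (p / (2 * (p - 2))) := hα
  have hXpos : 0 < S ^ (p / (2 * (p - 2))) := Real.rpow_pos_of_pos hS _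
  linarith
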